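/- The homogeneous transport-collapse operator T(t) is non-expansive on L¹(ℝᵈ): for all u, v ∈ L¹(ℝᵈ), ‖T(t)u − T(t)v‖_{L¹(ℝᵈ)} ≤ ‖u − v‖_{L¹(ℝᵈ)}. -/

import Mathlib

open MeasureTheory

/-- The kinetic function `χ(λ,u)`: 1 if `0 < λ < u`, `-1` if `u < λ < 0`, 0 otherwise. -/
noncomputable def chi (l u : ℝ) : ℝ :=
  if 0 < l ∧ l < u then 1 else if u < l ∧ l < 0 then -1 else 0

lemma measurable_chi : Measurable fun p : ℝ × ℝ => chi p.1 p.2 := by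
  unfold chi
  apply Measurable.ite
  · exact (measurableSet_lt measurable_const measurable_fst).inter
      (measurableSet_lt measurable_fst measurable_snd)
  · exact measurable_const
  apply Measurable.ite
  · exact (measurableSet_lt measurable_snd measurable_fst).inter
      (measurableSet_lt measurable_fst measurable_const)
  · exact measurable_const
  · exact measurable_const

lemma chi_of_neg {l : ℝ} (hl : l < 0) (u : ℝ) : chi l u = if u < l then -1 else 0 := by
  unfold chi
  rw [if_neg (by rintro ⟨h1, _⟩; linarith)]
  by_cases h : u < l
  · rw [if_pos ⟨h, hl⟩, if_pos h]
  · rw [if_neg (by rintro ⟨h1, _⟩; exact h h1), if_neg h]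

lemma chi_of_pos {l : ℝ} (hl : 0 < l) (u : ℝ) : chi l u = if l < u then 1 else 0 := by
  unfold chi
  by_cases h : l < u
  · rw [if_pos ⟨hl, h⟩, if_pos h]
  · rw [if_neg (by rintro ⟨_, h2⟩; exact h h2), if_neg (by rintro ⟨_, h2⟩; linarith),
      if_neg h]

lemma abs_chi_sub_le (a b l : ℝ) (hab : a ≤ b) (h0 : l ≠ 0) (ha : l ≠ a) (hb : l ≠ b) :
    |chi l a - chi l b| = Set.indicator (Set.Ioo a b) 1 l := by
  simp only [Set.indicator_apply, Set.mem_Ioo, Pi.one_apply]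
  rcases ha.lt_or_gt with ha' | ha' <;> rcases hb.lt_or_gt with hb' | hb' <;>
    rcases h0.lt_or_gt with h0' | h0' <;>
    (first | rw [chi_of_neg h0', chi_of_neg h0'] | rw [chi_of_pos h0', chi_of_pos h0']) <;>
    by_cases hm1 : a < l <;> by_cases hm2 : l < b <;>
    simp only [hm1, hm2, true_and, false_and, and_true, and_false, if_true, if_false] <;>
    split_ifs <;> first | (exfalso; linarith) | norm_num

lemma abs_chi_sub (a b l : ℝ) (h0 : l ≠ 0) (ha : l ≠ a) (hb : l ≠ b) :
    |chi l a - chi l b| = Set.indicator (Set.Ioo (a ⊓ b) (a ⊔ b)) 1 l := by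
  rcases le_total a b with hab | hab
  · rw [inf_eq_left.2 hab, sup_eq_right.2 hab]; exact abs_chi_sub_le a b l hab h0 ha hb
  · rw [inf_eq_right.2 hab, sup_eq_left.2 hab, abs_sub_comm]
    exact abs_chi_sub_le b a l hab h0 hb ha

lemma chi_zero (l : ℝ) : chi l 0 = 0 := by
  unfold chi
  rw [if_neg, if_neg] <;> rintro ⟨h1, h2⟩ <;> linarith

lemma lintegral_abs_chi_sub (a b : ℝ) :
    ∫⁻ l : ℝ, ENNReal.ofReal |chi l a - chi l b| = ENNReal.ofReal |a - b| := by
  have hae : ∀ᵐ l : ℝ, l ∉ ({0, a, b} : Set ℝ) :=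
    (Set.Finite.insert 0 (Set.Finite.insert a (Set.finite_singleton b))).countable.ae_notMem volume
  have key : ∀ᵐ l : ℝ, ENNReal.ofReal |chi l a - chi l b|
      = Set.indicator (Set.Ioo (a ⊓ b) (a ⊔ b)) (fun _ => (1 : ENNReal)) l := by
    filter_upwards [hae] with l hl
    simp only [Set.mem_insert_iff, Set.mem_singleton_iff, not_or] at hl
    rw [abs_chi_sub a b l hl.1 hl.2.1 hl.2.2]
    by_cases hm : l ∈ Set.Ioo (a ⊓ b) (a ⊔ b) <;> simp [hm]
  rw [lintegral_congr_ae key, lintegral_indicator measurableSet_Ioo]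
  simp only [lintegral_const, Measure.restrict_apply MeasurableSet.univ, Set.univ_inter, one_mul,
    Real.volume_Ioo]
  rw [max_sub_min_eq_abs, abs_sub_comm]

lemma lintegral_abs_chi (a : ℝ) :
    ∫⁻ l : ℝ, ENNReal.ofReal |chi l a| = ENNReal.ofReal |a| := by
  have := lintegral_abs_chi_sub a 0
  simpa [chi_zero] using this

lemma key_lintegral {d : ℕ} (f' : ℝ → EuclideanSpace ℝ (Fin d)) (hf' : Continuous f') (t : ℝ)
    (w z : EuclideanSpace ℝ (Fin d) → ℝ) (hw : Measurable w) (hz : Measurable z) :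
    ∫⁻ x : EuclideanSpace ℝ (Fin d), ∫⁻ l : ℝ,
        ENNReal.ofReal |chi l (w (x - t • f' l)) - chi l (z (x - t • f' l))|
      = ∫⁻ y : EuclideanSpace ℝ (Fin d), ENNReal.ofReal |w y - z y| := by
  have hmap : Measurable fun p : EuclideanSpace ℝ (Fin d) × ℝ => p.1 - t • f' p.2 :=
    measurable_fst.sub ((hf'.measurable.comp measurable_snd).const_smul t)
  have hchiw : Measurable fun p : EuclideanSpace ℝ (Fin d) × ℝ => chi p.2 (w (p.1 - t • f' p.2)) :=
    measurable_chi.comp (measurable_snd.prodMk (hw.comp hmap))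
  have hchiz : Measurable fun p : EuclideanSpace ℝ (Fin d) × ℝ => chi p.2 (z (p.1 - t • f' p.2)) :=
    measurable_chi.comp (measurable_snd.prodMk (hz.comp hmap))
  have hΦ : Measurable fun p : EuclideanSpace ℝ (Fin d) × ℝ =>
      ENNReal.ofReal |chi p.2 (w (p.1 - t • f' p.2)) - chi p.2 (z (p.1 - t • f' p.2))| :=
    ((hchiw.sub hchiz).abs).ennreal_ofReal
  rw [← lintegral_prod _ hΦ.aemeasurable, lintegral_prod_symm _ hΦ.aemeasurable]
  have h1 : ∀ l : ℝ, ∫⁻ x : EuclideanSpace ℝ (Fin d),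
      ENNReal.ofReal |chi l (w (x - t • f' l)) - chi l (z (x - t • f' l))|
      = ∫⁻ y : EuclideanSpace ℝ (Fin d), ENNReal.ofReal |chi l (w y) - chi l (z y)| := fun l =>
    lintegral_sub_right_eq_self
      (fun y => ENNReal.ofReal |chi l (w y) - chi l (z y)|) (t • f' l)
  simp_rw [h1]
  have hΨ : AEMeasurable (Function.uncurry fun (l : ℝ) (y : EuclideanSpace ℝ (Fin d)) =>
      ENNReal.ofReal |chi l (w y) - chi l (z y)|) (volume.prod volume) := by
    refine Measurable.aemeasurable ?_
    exact (((measurable_chi.comp (measurable_fst.prodMk (hw.comp measurable_snd))).sub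
      (measurable_chi.comp (measurable_fst.prodMk (hz.comp measurable_snd)))).abs).ennreal_ofReal
  rw [lintegral_lintegral_swap hΨ]
  simp_rw [lintegral_abs_chi_sub]

theorem aux_nonexpansive {d : ℕ} (f' : ℝ → EuclideanSpace ℝ (Fin d)) (hf' : Continuous f')
    (t : ℝ) (u v : EuclideanSpace ℝ (Fin d) → ℝ)
    (hum : Measurable u) (hvm : Measurable v) (hu : Integrable u) (hv : Integrable v) :
    ∫ x : EuclideanSpace ℝ (Fin d),
        |(∫ l : ℝ, chi l (u (x - t • f' l))) - ∫ l : ℝ, chi l (v (x - t • f' l))|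
      ≤ ∫ x : EuclideanSpace ℝ (Fin d), |u x - v x| := by
  have hmap : Measurable fun p : EuclideanSpace ℝ (Fin d) × ℝ => p.1 - t • f' p.2 :=
    measurable_fst.sub ((hf'.measurable.comp measurable_snd).const_smul t)
  have hF : Measurable fun p : EuclideanSpace ℝ (Fin d) × ℝ => chi p.2 (u (p.1 - t • f' p.2)) :=
    measurable_chi.comp (measurable_snd.prodMk (hum.comp hmap))
  have hG : Measurable fun p : EuclideanSpace ℝ (Fin d) × ℝ => chi p.2 (v (p.1 - t • f' p.2)) :=
    measurable_chi.comp (measurable_snd.prodMk (hvm.comp hmap))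
  -- a.e. integrability in l
  have hfin : ∀ (w : EuclideanSpace ℝ (Fin d) → ℝ), Measurable w → Integrable w →
      ∀ᵐ x : EuclideanSpace ℝ (Fin d),
        Integrable (fun l : ℝ => chi l (w (x - t • f' l))) := by
    intro w hwm hwi
    have hWm : Measurable fun p : EuclideanSpace ℝ (Fin d) × ℝ =>
        chi p.2 (w (p.1 - t • f' p.2)) :=
      measurable_chi.comp (measurable_snd.prodMk (hwm.comp hmap))
    have hkey : ∫⁻ x : EuclideanSpace ℝ (Fin d), ∫⁻ l : ℝ,
        ENNReal.ofReal |chi l (w (x - t • f' l))| < ⊤ := by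
      have := key_lintegral f' hf' t w 0 hwm measurable_const
      simp only [Pi.zero_apply, chi_zero, sub_zero] at this
      rw [this]
      simp_rw [← Real.enorm_eq_ofReal_abs]
      exact hwi.2
    have hmeas : Measurable fun x : EuclideanSpace ℝ (Fin d) =>
        ∫⁻ l : ℝ, ENNReal.ofReal |chi l (w (x - t • f' l))| :=
      Measurable.lintegral_prod_right (hWm.abs.ennreal_ofReal)
    have := ae_lt_top hmeas hkey.ne
    filter_upwards [this] with x hx
    refine ⟨(hWm.comp (measurable_prodMk_left)).aestronglyMeasurable, ?_⟩
    rw [hasFiniteIntegral_iff_norm]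
    simpa [Real.norm_eq_abs] using hx
  -- pointwise step
  have step2 : ∀ᵐ x : EuclideanSpace ℝ (Fin d),
      ENNReal.ofReal |(∫ l : ℝ, chi l (u (x - t • f' l))) - ∫ l : ℝ, chi l (v (x - t • f' l))|
        ≤ ∫⁻ l : ℝ, ENNReal.ofReal |chi l (u (x - t • f' l)) - chi l (v (x - t • f' l))| := by
    filter_upwards [hfin u hum hu, hfin v hvm hv] with x hx hy
    rw [← integral_sub hx hy]
    calc ENNReal.ofReal |∫ l : ℝ, (chi l (u (x - t • f' l)) - chi l (v (x - t • f' l)))|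
        ≤ ENNReal.ofReal (∫ l : ℝ, |chi l (u (x - t • f' l)) - chi l (v (x - t • f' l))|) := by
          apply ENNReal.ofReal_le_ofReal
          simpa [Real.norm_eq_abs] using
            norm_integral_le_integral_norm fun l : ℝ =>
              chi l (u (x - t • f' l)) - chi l (v (x - t • f' l))
      _ = ∫⁻ l : ℝ, ENNReal.ofReal |chi l (u (x - t • f' l)) - chi l (v (x - t • f' l))| :=
          ofReal_integral_eq_lintegral_ofReal (hx.sub hy).abs
            (Filter.Eventually.of_forall fun l => abs_nonneg _)
  -- strongly measurable integrals
  have hTu : StronglyMeasurable fun x : EuclideanSpace ℝ (Fin d) =>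
      ∫ l : ℝ, chi l (u (x - t • f' l)) :=
    StronglyMeasurable.integral_prod_right (hF.stronglyMeasurable)
  have hTv : StronglyMeasurable fun x : EuclideanSpace ℝ (Fin d) =>
      ∫ l : ℝ, chi l (v (x - t • f' l)) :=
    StronglyMeasurable.integral_prod_right (hG.stronglyMeasurable)
  rw [integral_eq_lintegral_of_nonneg_ae (f := fun x : EuclideanSpace ℝ (Fin d) =>
        |(∫ l : ℝ, chi l (u (x - t • f' l))) - ∫ l : ℝ, chi l (v (x - t • f' l))|)
      (Filter.Eventually.of_forall fun x => abs_nonneg _)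
      (((hTu.measurable.sub hTv.measurable).abs).aestronglyMeasurable),
    integral_eq_lintegral_of_nonneg_ae (f := fun x : EuclideanSpace ℝ (Fin d) => |u x - v x|)
      (Filter.Eventually.of_forall fun x => abs_nonneg _)
      (((hum.sub hvm).abs).aestronglyMeasurable)]
  have hRfin : ∫⁻ x : EuclideanSpace ℝ (Fin d), ENNReal.ofReal |u x - v x| ≠ ⊤ := by
    simp_rw [← Real.enorm_eq_ofReal_abs]
    exact (hu.sub hv).2.ne
  apply ENNReal.toReal_mono hRfin
  calc ∫⁻ x : EuclideanSpace ℝ (Fin d),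
        ENNReal.ofReal |(∫ l : ℝ, chi l (u (x - t • f' l))) - ∫ l : ℝ, chi l (v (x - t • f' l))|
      ≤ ∫⁻ x : EuclideanSpace ℝ (Fin d), ∫⁻ l : ℝ,
          ENNReal.ofReal |chi l (u (x - t • f' l)) - chi l (v (x - t • f' l))| :=
        lintegral_mono_ae step2
    _ = ∫⁻ y : EuclideanSpace ℝ (Fin d), ENNReal.ofReal |u y - v y| :=
        key_lintegral f' hf' t u v hum hvm

lemma ae_shift_integral_eq {d : ℕ} (f' : ℝ → EuclideanSpace ℝ (Fin d)) (hf' : Continuous f')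
    (t : ℝ) (w w' : EuclideanSpace ℝ (Fin d) → ℝ) (hww' : w =ᵐ[volume] w') :
    ∀ᵐ x : EuclideanSpace ℝ (Fin d),
      (∫ l : ℝ, chi l (w (x - t • f' l))) = ∫ l : ℝ, chi l (w' (x - t • f' l)) := by
  set N : Set (EuclideanSpace ℝ (Fin d)) := toMeasurable volume {x | w x ≠ w' x} with hN
  have hN0 : volume N = 0 := by
    rw [hN, measure_toMeasurable]
    exact ae_iff.mp hww'
  have hNm : MeasurableSet N := measurableSet_toMeasurable _ _
  set S2 : Set (ℝ × EuclideanSpace ℝ (Fin d)) := {p | p.2 - t • f' p.1 ∈ N} with hS2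
  have hS2m : MeasurableSet S2 :=
    (measurable_snd.sub ((hf'.measurable.comp measurable_fst).const_smul t)) hNm
  have hS20 : (volume.prod volume) S2 = 0 := by
    rw [Measure.measure_prod_null hS2m]
    refine Filter.Eventually.of_forall fun l => ?_
    have heq : (Prod.mk l ⁻¹' S2) = (fun x : EuclideanSpace ℝ (Fin d) => x + -(t • f' l)) ⁻¹' N := by
      ext x; simp [hS2, sub_eq_add_neg]
    show volume (Prod.mk l ⁻¹' S2) = 0
    rw [heq, measure_preimage_add_right, hN0]
  have hS0 : (volume.prod volume) (Prod.swap ⁻¹' S2 :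
      Set (EuclideanSpace ℝ (Fin d) × ℝ)) = 0 := by
    have := Measure.prod_swap (μ := (volume : Measure (EuclideanSpace ℝ (Fin d))))
      (ν := (volume : Measure ℝ))
    calc (volume.prod volume) (Prod.swap ⁻¹' S2)
        = (Measure.map Prod.swap ((volume : Measure (EuclideanSpace ℝ (Fin d))).prod volume)) S2 := by
          rw [Measure.map_apply measurable_swap hS2m]
      _ = ((volume : Measure ℝ).prod volume) S2 := by rw [this]
      _ = 0 := hS20
  have haep : ∀ᵐ p : EuclideanSpace ℝ (Fin d) × ℝ ∂(volume.prod volume),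
      w (p.1 - t • f' p.2) = w' (p.1 - t • f' p.2) := by
    rw [ae_iff]
    refine measure_mono_null ?_ hS0
    intro p hp
    simp only [Set.mem_setOf_eq] at hp
    exact subset_toMeasurable _ _ hp
  filter_upwards [Measure.ae_ae_of_ae_prod haep] with x hx
  exact integral_congr_ae (hx.mono fun l hl => by simp only [hl])


/-- the homogeneous transport-collapse operator
`T(t)u(x) = ∫_ℝ χ(λ, u(x − f'(λ)t)) dλ` is non-expansive on `L¹(ℝᵈ)`:
`‖T(t)u − T(t)v‖_{L¹} ≤ ‖u − v‖_{L¹}`. -/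
theorem transport_collapse_nonexpansive {d : ℕ}
    (f f' : ℝ → EuclideanSpace ℝ (Fin d)) (hf : ∀ l : ℝ, HasDerivAt f (f' l) l)
    (hf' : Continuous f') (t : ℝ) (ht : 0 ≤ t)
    (u v : EuclideanSpace ℝ (Fin d) → ℝ) (hu : Integrable u) (hv : Integrable v) :
    ∫ x : EuclideanSpace ℝ (Fin d),
        |(∫ l : ℝ, chi l (u (x - t • f' l))) - ∫ l : ℝ, chi l (v (x - t • f' l))|
      ≤ ∫ x : EuclideanSpace ℝ (Fin d), |u x - v x| := by
  set u' := hu.1.mk u with hu'def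
  set v' := hv.1.mk v with hv'def
  have hequ : u =ᵐ[volume] u' := hu.1.ae_eq_mk
  have heqv : v =ᵐ[volume] v' := hv.1.ae_eq_mk
  have hu'm : Measurable u' := hu.1.measurable_mk
  have hv'm : Measurable v' := hv.1.measurable_mk
  have hu' : Integrable u' := hu.congr hequ
  have hv' : Integrable v' := hv.congr heqv
  have hL : (fun x : EuclideanSpace ℝ (Fin d) =>
        |(∫ l : ℝ, chi l (u (x - t • f' l))) - ∫ l : ℝ, chi l (v (x - t • f' l))|)
      =ᵐ[volume] fun x =>
        |(∫ l : ℝ, chi l (u' (x - t • f' l))) - ∫ l : ℝ, chi l (v' (x - t • f' l))| := by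
    filter_upwards [ae_shift_integral_eq f' hf' t u u' hequ,
      ae_shift_integral_eq f' hf' t v v' heqv] with x h1 h2
    rw [h1, h2]
  have hR : (fun x : EuclideanSpace ℝ (Fin d) => |u x - v x|)
      =ᵐ[volume] fun x => |u' x - v' x| := by
    filter_upwards [hequ, heqv] with x h1 h2
    rw [h1, h2]
  rw [integral_congr_ae hL, integral_congr_ae hR]
  exact aux_nonexpansive f' hf' t u' v' hu'm hv'm hu' hv'
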